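/- Under the hypotheses of the main inequality (E_{P_{WZ^n}}[exp(λ·gen(W,Z^n) − λ²σ²/(2n) − ı(W,Z^n))] ≤ 1 for all λ), the average generalization error satisfies |E_{P_{WZ^n}}[gen(W,Z^n)]| ≤ √((2σ²/n)·I(W;Z^n)), where I(W;Z^n) = E_{P_{WZ^n}}[ı(W,Z^n)] is the mutual information. -/

import Mathlib

open MeasureTheory Real

/-- Corollary 1: under the main exponential-moment inequality, the average generalization
error satisfies `|E[gen(W,Z^n)]| ≤ √((2σ²/n) I(W;Z^n))`, with `I(W;Z^n) = E[ı(W,Z^n)]`. -/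
theorem average_generalization_bound {𝒲 𝒵 : Type*} [MeasurableSpace 𝒲] [MeasurableSpace 𝒵]
    (μ : Measure (𝒲 × 𝒵)) [IsProbabilityMeasure μ] (σ : ℝ) (hσ : 0 < σ) (n : ℕ) (hn : 0 < n)
    (μW : Measure 𝒲) (μZ : Measure 𝒵) (hμW : μW = μ.map Prod.fst) (hμZ : μZ = μ.map Prod.snd)
    (hac : μ ≪ μW.prod μZ)
    (gen : 𝒲 × 𝒵 → ℝ) (hgen : Measurable gen) (hgenint : Integrable gen μ)
    (i : 𝒲 × 𝒵 → ℝ) (hi : i = fun p => Real.log ((μ.rnDeriv (μW.prod μZ) p).toReal))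
    (hiint : Integrable i μ)
    (hexp : ∀ l : ℝ,
      ∫⁻ p, ENNReal.ofReal (Real.exp (l * gen p - l ^ 2 * σ ^ 2 / (2 * n) - i p)) ∂μ ≤ 1) :
    |∫ p, gen p ∂μ| ≤ Real.sqrt ((2 * σ ^ 2 / n) * ∫ p, i p ∂μ) := by
  have hmi : Measurable i := by
    rw [hi]; exact (Measure.measurable_rnDeriv _ _).ennreal_toReal.log
  set A := ∫ p, gen p ∂μ with hA
  set B := ∫ p, i p ∂μ with hB
  have hnpos : (0:ℝ) < n := by exact_mod_cast hn
  have key : ∀ l : ℝ, l * A - l ^ 2 * σ ^ 2 / (2 * n) - B ≤ 0 := by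
    intro l
    set X : 𝒲 × 𝒵 → ℝ := fun p => l * gen p - l ^ 2 * σ ^ 2 / (2 * n) - i p with hX
    have hXm : Measurable X := ((hgen.const_mul l).sub measurable_const).sub hmi
    have hXint : Integrable X μ := ((hgenint.const_mul l).sub (integrable_const _)).sub hiint
    have hexpint : Integrable (fun p => Real.exp (X p)) μ := by
      refine ⟨hXm.exp.aestronglyMeasurable, ?_⟩
      rw [hasFiniteIntegral_iff_ofReal (Filter.Eventually.of_forall fun p => (Real.exp_pos _).le)]
      exact lt_of_le_of_lt (hexp l) ENNReal.one_lt_top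
    have hle1 : ∫ p, Real.exp (X p) ∂μ ≤ 1 := by
      rw [integral_eq_lintegral_of_nonneg_ae
        (Filter.Eventually.of_forall fun p => (Real.exp_pos _).le) hXm.exp.aestronglyMeasurable]
      exact ENNReal.toReal_le_of_le_ofReal zero_le_one (by simpa using hexp l)
    have hmono : ∫ p, (X p + 1) ∂μ ≤ ∫ p, Real.exp (X p) ∂μ :=
      integral_mono (hXint.add (integrable_const _)) hexpint
        fun p => Real.add_one_le_exp _
    have h1 : Integrable (fun p => l * gen p - l ^ 2 * σ ^ 2 / (2 * (n:ℝ))) μ :=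
      (hgenint.const_mul l).sub (integrable_const _)
    have hXval : ∫ p, X p ∂μ = l * A - l ^ 2 * σ ^ 2 / (2 * n) - B := by
      have e1 : ∫ p, X p ∂μ
          = (∫ p, (l * gen p - l ^ 2 * σ ^ 2 / (2 * (n:ℝ))) ∂μ) - ∫ p, i p ∂μ :=
        integral_sub h1 hiint
      have e2 : ∫ p, (l * gen p - l ^ 2 * σ ^ 2 / (2 * (n:ℝ))) ∂μ
          = (∫ p, l * gen p ∂μ) - ∫ (_ : 𝒲 × 𝒵), (l ^ 2 * σ ^ 2 / (2 * (n:ℝ))) ∂μ :=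
        integral_sub (hgenint.const_mul l) (integrable_const _)
      rw [e1, e2, integral_const_mul, integral_const]
      simp [hA, hB]
    have := (integral_add hXint (integrable_const (1:ℝ))).symm.trans_le hmono
    rw [integral_const] at this
    simp only [probReal_univ, smul_eq_mul, one_mul] at this
    rw [hXval] at this
    linarith
  have hquad : ∀ x : ℝ, 0 ≤ σ ^ 2 / (2 * n) * (x * x) + (-A) * x + B := by
    intro x
    have := key x
    have h2n : (0:ℝ) < 2 * n := by linarith
    have : x * A - x ^ 2 * σ ^ 2 / (2 * n) - B ≤ 0 := this
    have heq : x ^ 2 * σ ^ 2 / (2 * (n:ℝ)) = σ ^ 2 / (2 * (n:ℝ)) * (x * x) := by ring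
    linarith [this, heq.ge, heq.le]
  have hd := discrim_le_zero hquad
  rw [discrim] at hd
  have hA2 : A ^ 2 ≤ 2 * σ ^ 2 / n * B := by
    have h2n : (0:ℝ) < 2 * n := by linarith
    have : (-A) ^ 2 - 4 * (σ ^ 2 / (2 * n)) * B ≤ 0 := hd
    have h4 : 4 * (σ ^ 2 / (2 * n)) * B = 2 * σ ^ 2 / n * B := by
      field_simp; ring
    nlinarith [this]
  calc |A| = Real.sqrt (A ^ 2) := (Real.sqrt_sq_eq_abs A).symm
    _ ≤ Real.sqrt (2 * σ ^ 2 / n * B) := Real.sqrt_le_sqrt hA2
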